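/- arXiv:1309.3319 — 5 statements merged into one kernel-verified Lean document; each statement's English description precedes it below -/
import Mathlib

section
/- Define two requests (i,j) and (k,ℓ) on ordered node identifiers to intersect iff exactly one of k, ℓ lies strictly between i and j. In any binary search tree T on node set {1,…,n}, if (i,j) is an edge of T and (i,j) intersects (k,ℓ), then (k,ℓ) is not an edge of T. -/
/-- Binary trees with natural-number keys. -/
inductive BTree where
  | leaf : BTree
  | node : BTree → ℕ → BTree → BTree

/-- In-order traversal of a binary tree. -/
def BTree.inorder : BTree → List ℕ
  | .leaf => []
  | .node l v r => l.inorder ++ v :: r.inorder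

/-- The key at the root, if any. -/
def BTree.root? : BTree → Option ℕ
  | .leaf => none
  | .node _ v _ => some v

/-- The (parent, child) edges of a binary tree. -/
def BTree.edges : BTree → List (ℕ × ℕ)
  | .leaf => []
  | .node l v r =>
      (l.root?.toList.map fun w => (v, w)) ++
      (r.root?.toList.map fun w => (v, w)) ++ l.edges ++ r.edges

/-- `u` and `v` are joined by a (parent-child) edge of `t`. -/
def BTree.IsEdge (t : BTree) (u v : ℕ) : Prop :=
  (u, v) ∈ t.edges ∨ (v, u) ∈ t.edges

/-- `t` is a binary search tree on `{1,…,n}`: its in-order traversal is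
`1, 2, …, n`. -/
def IsBST (n : ℕ) (t : BTree) : Prop := t.inorder = List.range' 1 n

/-- Requests `(i,j)` and `(k,l)` intersect: exactly one of `k, l` lies
strictly between `i` and `j`. -/
def Intersects (i j k l : ℕ) : Prop :=
  (min i j < k ∧ k < max i j ∧ ¬(min i j ≤ l ∧ l ≤ max i j)) ∨
  (¬(min i j ≤ k ∧ k ≤ max i j) ∧ min i j < l ∧ l < max i j)

lemma root_mem {t : BTree} {w : ℕ} (h : t.root? = some w) : w ∈ t.inorder := by
  cases t with
  | leaf => simp [BTree.root?] at h
  | node l v r =>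
    simp [BTree.root?] at h
    subst h; simp [BTree.inorder]

lemma edge_mem {t : BTree} {u v : ℕ} (h : (u, v) ∈ t.edges) :
    u ∈ t.inorder ∧ v ∈ t.inorder := by
  induction t with
  | leaf => simp [BTree.edges] at h
  | node l c r ihl ihr =>
    simp only [BTree.edges, List.mem_append, List.mem_map, Option.mem_toList] at h
    simp only [BTree.inorder, List.mem_append, List.mem_cons]
    rcases h with ((⟨w, hw, he⟩|⟨w, hw, he⟩)|h)|h
    · obtain ⟨rfl, rfl⟩ := Prod.mk.injEq .. ▸ he
      exact ⟨Or.inr (Or.inl rfl), Or.inl (root_mem hw)⟩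
    · obtain ⟨rfl, rfl⟩ := Prod.mk.injEq .. ▸ he
      exact ⟨Or.inr (Or.inl rfl), Or.inr (Or.inr (root_mem hw))⟩
    · have := ihl h; tauto
    · have := ihr h; tauto

lemma root_not_between {t : BTree} (hs : t.inorder.Pairwise (· < ·))
    {u v c : ℕ} (h : (u, v) ∈ t.edges) (hc : t.root? = some c) :
    ¬(min u v < c ∧ c < max u v) := by
  induction t with
  | leaf => simp [BTree.edges] at h
  | node L c0 R ihl ihr =>
    simp only [BTree.root?, Option.some.injEq] at hc
    subst hc
    simp only [BTree.inorder, List.pairwise_append, List.pairwise_cons] at hs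
    obtain ⟨hL, ⟨hcR, hR⟩, hLc⟩ := hs
    have hLlt : ∀ x ∈ L.inorder, x < c0 := fun x hx => hLc x hx c0 List.mem_cons_self
    simp only [BTree.edges, List.mem_append, List.mem_map, Option.mem_toList] at h
    rcases h with ((⟨w, hw, he⟩|⟨w, hw, he⟩)|h)|h
    · obtain ⟨rfl, rfl⟩ := Prod.mk.injEq .. ▸ he
      have : w < c0 := hLlt w (root_mem hw)
      omega
    · obtain ⟨rfl, rfl⟩ := Prod.mk.injEq .. ▸ he
      have : c0 < w := hcR w (root_mem hw)
      omega
    · have hu : u < c0 := hLlt u (edge_mem h).1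
      have hv : v < c0 := hLlt v (edge_mem h).2
      omega
    · have hu : c0 < u := hcR u (edge_mem h).1
      have hv : c0 < v := hcR v (edge_mem h).2
      omega

lemma main_lemma {t : BTree} (hs : t.inorder.Pairwise (· < ·))
    {u v k l : ℕ} (huv : (u, v) ∈ t.edges) (hkl : (k, l) ∈ t.edges) :
    (min u v < k → k < max u v → min u v ≤ l ∧ l ≤ max u v) ∧
    (min u v < l → l < max u v → min u v ≤ k ∧ k ≤ max u v) := by
  induction t with
  | leaf => simp [BTree.edges] at huv
  | node L c R ihl ihr =>
    have hs' := hs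
    simp only [BTree.inorder, List.pairwise_append, List.pairwise_cons] at hs'
    obtain ⟨hL, ⟨hcR, hR⟩, hLc⟩ := hs'
    have hLlt : ∀ x ∈ L.inorder, x < c := fun x hx => hLc x hx c List.mem_cons_self
    have hRgt : ∀ x ∈ R.inorder, c < x := fun x hx => hcR x hx
    simp only [BTree.edges, List.mem_append, List.mem_map, Option.mem_toList] at huv hkl
    rcases huv with ((⟨w, hw, he⟩|⟨w, hw, he⟩)|huv)|huv
    · -- (u,v) = (c, w), w = root L, w < c
      obtain ⟨rfl, rfl⟩ := Prod.mk.injEq .. ▸ he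
      have hwc : w < c := hLlt w (root_mem hw)
      rcases hkl with ((⟨w', hw', he⟩|⟨w', hw', he⟩)|hkl)|hkl
      · obtain ⟨rfl, rfl⟩ := Prod.mk.injEq .. ▸ he
        have : w' < c := hLlt w' (root_mem hw')
        omega
      · obtain ⟨rfl, rfl⟩ := Prod.mk.injEq .. ▸ he
        have : c < w' := hRgt w' (root_mem hw')
        omega
      · -- (k,l) ∈ L.edges
        have hk := hLlt k (edge_mem hkl).1
        have hl := hLlt l (edge_mem hkl).2
        have hnb := root_not_between hL hkl hw
        constructor
        · intro h1 h2
          refine ⟨?_, by omega⟩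
          by_contra hc'
          exact hnb (by omega)
        · intro h1 h2
          refine ⟨?_, by omega⟩
          by_contra hc'
          exact hnb (by omega)
      · have hk := hRgt k (edge_mem hkl).1
        have hl := hRgt l (edge_mem hkl).2
        omega
    · -- (u,v) = (c, w), w = root R, c < w
      obtain ⟨rfl, rfl⟩ := Prod.mk.injEq .. ▸ he
      have hwc : c < w := hRgt w (root_mem hw)
      rcases hkl with ((⟨w', hw', he⟩|⟨w', hw', he⟩)|hkl)|hkl
      · obtain ⟨rfl, rfl⟩ := Prod.mk.injEq .. ▸ he
        have : w' < c := hLlt w' (root_mem hw')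
        omega
      · obtain ⟨rfl, rfl⟩ := Prod.mk.injEq .. ▸ he
        have : c < w' := hRgt w' (root_mem hw')
        omega
      · have hk := hLlt k (edge_mem hkl).1
        have hl := hLlt l (edge_mem hkl).2
        omega
      · have hk := hRgt k (edge_mem hkl).1
        have hl := hRgt l (edge_mem hkl).2
        have hnb := root_not_between hR hkl hw
        constructor
        · intro h1 h2
          refine ⟨by omega, ?_⟩
          by_contra hc'
          exact hnb (by omega)
        · intro h1 h2
          refine ⟨by omega, ?_⟩
          by_contra hc'
          exact hnb (by omega)
    · -- (u,v) ∈ L.edges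
      have hu := hLlt u (edge_mem huv).1
      have hv := hLlt v (edge_mem huv).2
      rcases hkl with ((⟨w', hw', he⟩|⟨w', hw', he⟩)|hkl)|hkl
      · -- (k,l) = (c, w'), w' = root L
        obtain ⟨rfl, rfl⟩ := Prod.mk.injEq .. ▸ he
        have hnb := root_not_between hL huv hw'
        have : w' < c := hLlt w' (root_mem hw')
        constructor
        · omega
        · intro h1 h2; exact absurd (by omega) hnb
      · obtain ⟨rfl, rfl⟩ := Prod.mk.injEq .. ▸ he
        have : c < w' := hRgt w' (root_mem hw')
        omega
      · exact ihl hL huv hkl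
      · have hk := hRgt k (edge_mem hkl).1
        have hl := hRgt l (edge_mem hkl).2
        omega
    · -- (u,v) ∈ R.edges
      have hu := hRgt u (edge_mem huv).1
      have hv := hRgt v (edge_mem huv).2
      rcases hkl with ((⟨w', hw', he⟩|⟨w', hw', he⟩)|hkl)|hkl
      · obtain ⟨rfl, rfl⟩ := Prod.mk.injEq .. ▸ he
        have : w' < c := hLlt w' (root_mem hw')
        omega
      · obtain ⟨rfl, rfl⟩ := Prod.mk.injEq .. ▸ he
        have hnb := root_not_between hR huv hw'
        have : c < w' := hRgt w' (root_mem hw')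
        constructor
        · omega
        · intro h1 h2; exact absurd (by omega) hnb
      · have hk := hLlt k (edge_mem hkl).1
        have hl := hLlt l (edge_mem hkl).2
        omega
      · exact ihr hR huv hkl

/-- In any BST on `{1,…,n}`, if `(i,j)` is an edge and `(i,j)` intersects
`(k,l)`, then `(k,l)` is not an edge. -/
theorem stmt_6 (n : ℕ) (t : BTree) (i j k l : ℕ)
    (hB : IsBST n t) (hij : t.IsEdge i j) (hX : Intersects i j k l) :
    ¬ t.IsEdge k l := by
  have hp : t.inorder.Pairwise (· < ·) := by
    rw [hB]; exact List.pairwise_lt_range'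
  intro hkl
  unfold Intersects at hX
  rcases hij with h1 | h1 <;> rcases hkl with h2 | h2 <;>
    have H := main_lemma hp h1 h2 <;> omega
end

section
/- Let σ be a set of pairwise non-intersecting requests forming a perfect matching on {1,…,n} (n even). Then there exists a binary search tree T on {1,…,n} such that every matched pair (u,v) ∈ σ is an edge of T. -/
lemma edge_node_left {t1 t2 : BTree} {v u w : ℕ} (h : t1.IsEdge u w) :
    (BTree.node t1 v t2).IsEdge u w := by
  rcases h with h | h
  · exact Or.inl (by simp [BTree.edges]; tauto)
  · exact Or.inr (by simp [BTree.edges]; tauto)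

lemma edge_node_right {t1 t2 : BTree} {v u w : ℕ} (h : t2.IsEdge u w) :
    (BTree.node t1 v t2).IsEdge u w := by
  rcases h with h | h
  · exact Or.inl (by simp [BTree.edges]; tauto)
  · exact Or.inr (by simp [BTree.edges]; tauto)

lemma range'_glue (a k1 k2 : ℕ) :
    (a :: (List.range' (a+1) k1 ++ (a+1+k1) :: List.range' (a+2+k1) k2))
      = List.range' a (k1+k2+2) := by
  have e1 : a+2+k1 = a+1+k1+1 := by omega
  have h0 : (a+1+k1) :: List.range' (a+2+k1) k2 = List.range' (a+1+k1) (k2+1) := by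
    rw [List.range'_succ, e1]
  rw [h0, List.range'_append_1]
  rw [show List.range' a (k1+k2+2) = a :: List.range' (a+1) (k1+k2+1) from @List.range'_succ a (k1+k2+1) 1]
  have e2 : k1+(k2+1) = k1+k2+1 := by omega
  rw [e2]

lemma key : ∀ len a (M : Finset (ℕ×ℕ)),
    (∀ p ∈ M, a ≤ p.1 ∧ p.1 < p.2 ∧ p.2 < a + len) →
    (∀ x, a ≤ x → x < a + len → ∃! p, p ∈ M ∧ (x = p.1 ∨ x = p.2)) →
    (∀ p ∈ M, ∀ q ∈ M, p ≠ q → ¬ Intersects p.1 p.2 q.1 q.2) →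
    ∃ t : BTree, t.inorder = List.range' a len ∧ ∀ p ∈ M, t.IsEdge p.1 p.2 := by
  intro len
  induction len using Nat.strong_induction_on with
  | _ len IH =>
    intro a M hb hcov hni
    rcases Nat.eq_zero_or_pos len with rfl | hpos
    · exact ⟨.leaf, by simp [BTree.inorder], fun p hp => absurd (hb p hp) (by omega)⟩
    obtain ⟨p, ⟨hpM, hpa⟩, huniq⟩ := hcov a le_rfl (by omega)
    have hpb := hb p hpM
    have hp1 : p.1 = a := by omega
    set m := p.2 with hm
    have hbm : a < m ∧ m < a + len := by omega
    obtain ⟨r, hr, hur⟩ := hcov m (by omega) (by omega)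
    have hpr : p = r := hur p ⟨hpM, Or.inr rfl⟩
    have hsplit : ∀ q ∈ M, q ≠ p → (a < q.1 ∧ q.2 < m) ∨ (m < q.1) := by
      intro q hq hne
      have hqb := hb q hq
      have hq1a : q.1 ≠ a := fun h => hne (huniq q ⟨hq, Or.inl h.symm⟩)
      have hq1m : q.1 ≠ m := fun h => hne ((hur q ⟨hq, Or.inl h.symm⟩).trans hpr.symm)
      have hq2m : q.2 ≠ m := fun h => hne ((hur q ⟨hq, Or.inr h.symm⟩).trans hpr.symm)
      have hint := hni p hpM q hq (fun h => hne h.symm)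
      rw [hp1] at hint
      simp only [Intersects] at hint
      omega
    classical
    set M1 := M.filter (fun q => q.2 < m) with hM1
    set M2 := M.filter (fun q => m < q.1) with hM2
    have hM1mem : ∀ q, q ∈ M1 ↔ q ∈ M ∧ q.2 < m := by
      intro q; rw [hM1, Finset.mem_filter]
    have hM2mem : ∀ q, q ∈ M2 ↔ q ∈ M ∧ m < q.1 := by
      intro q; rw [hM2, Finset.mem_filter]
    obtain ⟨k1, hk1⟩ : ∃ k1, m = a + 1 + k1 := ⟨m - a - 1, by omega⟩
    obtain ⟨k2, hk2⟩ : ∃ k2, len = k1 + k2 + 2 := ⟨len - k1 - 2, by omega⟩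
    -- left subtree
    obtain ⟨t1, ht1i, ht1e⟩ := IH k1 (by omega) (a+1) M1
      (by
        intro q hq
        rw [hM1mem] at hq
        have := hb q hq.1
        have hne : q ≠ p := fun h => by rw [h] at hq; omega
        have := hsplit q hq.1 hne
        omega)
      (by
        intro x hx1 hx2
        obtain ⟨s, ⟨hsM, hsx⟩, hus⟩ := hcov x (by omega) (by omega)
        have hsb := hb s hsM
        have hne : s ≠ p := by
          intro h; rw [h, hp1] at hsx; omega
        have hss := hsplit s hsM hne
        have hsM1 : s ∈ M1 := by rw [hM1mem]; constructor; exact hsM; omega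
        exact ⟨s, ⟨hsM1, hsx⟩, fun y hy => hus y ⟨((hM1mem y).1 hy.1).1, hy.2⟩⟩)
      (by
        intro q hq q' hq' hne
        exact hni q ((hM1mem q).1 hq).1 q' ((hM1mem q').1 hq').1 hne)
    -- right subtree
    obtain ⟨t2, ht2i, ht2e⟩ := IH k2 (by omega) (m+1) M2
      (by
        intro q hq
        rw [hM2mem] at hq
        have := hb q hq.1
        omega)
      (by
        intro x hx1 hx2
        obtain ⟨s, ⟨hsM, hsx⟩, hus⟩ := hcov x (by omega) (by omega)
        have hsb := hb s hsM
        have hne : s ≠ p := by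
          intro h; rw [h, hp1] at hsx; omega
        have hss := hsplit s hsM hne
        have hsM2 : s ∈ M2 := by rw [hM2mem]; constructor; exact hsM; omega
        exact ⟨s, ⟨hsM2, hsx⟩, fun y hy => hus y ⟨((hM2mem y).1 hy.1).1, hy.2⟩⟩)
      (by
        intro q hq q' hq' hne
        exact hni q ((hM2mem q).1 hq).1 q' ((hM2mem q').1 hq').1 hne)
    refine ⟨.node .leaf a (.node t1 m t2), ?_, ?_⟩
    · show [] ++ a :: (t1.inorder ++ m :: t2.inorder) = List.range' a len
      rw [List.nil_append, ht1i, ht2i, hk2]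
      have h2 : m + 1 = a + 2 + k1 := by omega
      rw [h2, show m = a + 1 + k1 from hk1]
      exact range'_glue a k1 k2
    · intro q hq
      by_cases hqp : q = p
      · subst hqp
        left
        rw [hp1]
        simp [BTree.edges, BTree.root?]
        exact Or.inl rfl
      · rcases hsplit q hq hqp with h | h
        · have : q ∈ M1 := by rw [hM1mem]; exact ⟨hq, h.2⟩
          exact edge_node_right (edge_node_left (ht1e q this))
        · have : q ∈ M2 := by
            rw [hM2mem]; exact ⟨hq, h⟩
          exact edge_node_right (edge_node_right (ht2e q this))

/-- If `σ` (here `M`) is a perfect matching on `{1,…,n}` whose requests are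
pairwise non-intersecting, then there is a single BST on `{1,…,n}` in which
every matched pair is an edge. -/
theorem stmt_8 (n : ℕ) (hn : 2 ∣ n) (M : Finset (ℕ × ℕ))
    (horder : ∀ p ∈ M, p.1 < p.2)
    (hrange : ∀ p ∈ M, 1 ≤ p.1 ∧ p.2 ≤ n)
    (hcover : ∀ x, 1 ≤ x → x ≤ n → ∃! p, p ∈ M ∧ (x = p.1 ∨ x = p.2))
    (hni : ∀ p ∈ M, ∀ q ∈ M, p ≠ q → ¬ Intersects p.1 p.2 q.1 q.2) :
    ∃ t : BTree, IsBST n t ∧ ∀ p ∈ M, t.IsEdge p.1 p.2 := by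
  obtain ⟨t, ht1, ht2⟩ := key n 1 M
    (fun p hp => ⟨(hrange p hp).1, horder p hp, by have := (hrange p hp).2; omega⟩)
    (fun x hx1 hx2 => hcover x hx1 (by omega))
    hni
  exact ⟨t, ht1, ht2⟩
end

section
/- If σ is a perfect matching on {1,…,n} with at most k−1 pairwise intersections, then there exists a collection of k binary search trees T₁,…,Tₖ on {1,…,n} such that every matched pair of σ appears as an edge in some Tᵢ. -/
lemma Intersects.symm' {i j k l : ℕ} (h : Intersects i j k l) : Intersects k l i j := by
  unfold Intersects at *; omega

open scoped Classical in
noncomputable def build (S : Finset (ℕ × ℕ)) : ℕ → ℕ → BTree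
  | _, 0 => .leaf
  | lo, len+1 =>
    if h : ∃ j, lo < j ∧ j ≤ lo + len ∧ (lo, j) ∈ S then
      .node .leaf lo (.node (build S (lo+1) (h.choose - (lo+1))) h.choose
        (build S (h.choose+1) (lo + len - h.choose)))
    else
      .node .leaf lo (build S (lo+1) len)
termination_by lo len => len
decreasing_by
  · have := h.choose_spec; omega
  · have := h.choose_spec; omega
  · omega

lemma build_inorder (S : Finset (ℕ × ℕ)) : ∀ len lo, (build S lo len).inorder = List.range' lo len := by
  intro len
  induction len using Nat.strong_induction_on with
  | _ len ih =>
    match len with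
    | 0 => intro lo; simp [build, BTree.inorder]
    | len+1 =>
      intro lo
      rw [build]
      split
      · rename_i h
        obtain ⟨hs1, hs2, hs3⟩ := h.choose_spec
        generalize hq : h.choose = j at *
        simp only [BTree.inorder, List.nil_append]
        rw [ih (j - (lo+1)) (by omega), ih (lo + len - j) (by omega)]
        have e1 : (j :: List.range' (j+1) (lo + len - j)) = List.range' j (lo + len - j + 1) := by
          rw [List.range'_succ]
        rw [e1]
        have e2 := List.range'_append_1 (s := lo+1) (m := j - (lo+1)) (n := lo + len - j + 1)
        rw [show lo+1+(j-(lo+1)) = j by omega, show j-(lo+1)+(lo+len-j+1) = len by omega] at e2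
        rw [e2, ← List.range'_succ]
      · rename_i h
        simp only [BTree.inorder, List.nil_append]
        rw [ih len (by omega), ← List.range'_succ]

lemma edges_sub_left {l r : BTree} {v : ℕ} {e : ℕ × ℕ} (h : e ∈ l.edges) :
    e ∈ (BTree.node l v r).edges := by
  simp only [BTree.edges, List.mem_append]; tauto

lemma edges_sub_right {l r : BTree} {v : ℕ} {e : ℕ × ℕ} (h : e ∈ r.edges) :
    e ∈ (BTree.node l v r).edges := by
  simp only [BTree.edges, List.mem_append]; tauto

lemma edges_root_right {l r : BTree} {v w : ℕ} (h : r.root? = some w) :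
    (v, w) ∈ (BTree.node l v r).edges := by
  simp [BTree.edges, h]

lemma build_edge (S : Finset (ℕ × ℕ))
    (hord : ∀ p ∈ S, p.1 < p.2)
    (hni : ∀ p ∈ S, ∀ q ∈ S, p ≠ q → ¬ Intersects p.1 p.2 q.1 q.2)
    (hdisj : ∀ p ∈ S, ∀ q ∈ S, (p.1 = q.1 ∨ p.1 = q.2 ∨ p.2 = q.1 ∨ p.2 = q.2) → p = q) :
    ∀ len lo,
    (∀ q ∈ S, (lo ≤ q.1 ∧ q.1 < lo+len ∨ lo ≤ q.2 ∧ q.2 < lo+len) → lo ≤ q.1 ∧ q.2 < lo+len) →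
    ∀ p ∈ S, lo ≤ p.1 → p.2 < lo + len → (p.1, p.2) ∈ (build S lo len).edges := by
  intro len
  induction len using Nat.strong_induction_on with
  | _ len ih =>
    match len with
    | 0 =>
      intro lo _ p hp h1 h2
      have := hord p hp; omega
    | len+1 =>
      intro lo hscope p hp h1 h2
      have hpo := hord p hp
      rw [build]
      split
      · rename_i h
        obtain ⟨hs1, hs2, hs3⟩ := h.choose_spec
        generalize hq : h.choose = j at *
        by_cases hp1 : p.1 = lo
        · have hpe : p = (lo, j) := by
            apply hdisj p hp (lo, j) hs3; left; exact hp1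
          rw [hpe]
          exact edges_root_right (by simp [BTree.root?])
        · have hpne : p ≠ (lo, j) := fun hc => hp1 (by rw [hc])
          have hdist : p.1 ≠ lo ∧ p.1 ≠ j ∧ p.2 ≠ lo ∧ p.2 ≠ j := by
            refine ⟨?_, ?_, ?_, ?_⟩ <;> intro heq <;>
              exact hpne (hdisj p hp (lo, j) hs3 (by tauto))
          have hni' := hni p hp (lo, j) hs3 hpne
          unfold Intersects at hni'
          simp only at hni'
          have hdich : (lo < p.1 ∧ p.2 < j) ∨ (j < p.1) := by omega
          have hdistq : ∀ q ∈ S, q ≠ (lo, j) → q.1 ≠ lo ∧ q.1 ≠ j ∧ q.2 ≠ lo ∧ q.2 ≠ j := by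
            intro q hqS hqne
            refine ⟨?_, ?_, ?_, ?_⟩ <;> intro heq <;>
              exact hqne (hdisj q hqS (lo, j) hs3 (by tauto))
          rcases hdich with ⟨hd1, hd2⟩ | hd
          · apply edges_sub_right
            apply edges_sub_left
            apply ih (j - (lo+1)) (by omega) (lo+1)
            · intro q hqS hcase
              by_cases hqe : q = (lo, j)
              · rw [hqe] at hcase ⊢; simp only at hcase ⊢; omega
              · have hq4 := hdistq q hqS hqe
                have hqo := hord q hqS
                have hqsc := hscope q hqS
                have hniq := hni q hqS (lo, j) hs3 hqe
                unfold Intersects at hniq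
                simp only at hniq
                omega
            · exact hp
            · omega
            · omega
          · apply edges_sub_right
            apply edges_sub_right
            apply ih (lo + len - j) (by omega) (j+1)
            · intro q hqS hcase
              by_cases hqe : q = (lo, j)
              · rw [hqe] at hcase ⊢; simp only at hcase ⊢; omega
              · have hq4 := hdistq q hqS hqe
                have hqo := hord q hqS
                have hqsc := hscope q hqS
                have hniq := hni q hqS (lo, j) hs3 hqe
                unfold Intersects at hniq
                simp only at hniq
                omega
            · exact hp
            · omega
            · omega
      · rename_i h
        push_neg at h
        have hp1 : p.1 ≠ lo := by
          intro heq
          have hmem : (lo, p.2) ∈ S := by rw [← heq]; simpa using hp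
          exact h p.2 (by omega) (by omega) hmem
        apply edges_sub_right
        apply ih len (by omega) (lo+1)
        · intro q hqS hcase
          have hqo := hord q hqS
          have hqsc := hscope q hqS
          by_cases hq1 : q.1 = lo
          · have hmem : (lo, q.2) ∈ S := by rw [← hq1]; simpa using hqS
            exact absurd hmem (h q.2 (by omega) (by omega))
          · omega
        · exact hp
        · omega
        · omega

open scoped Classical in
lemma exists_coloring (k : ℕ) (hk : 1 ≤ k) :
    ∀ M : Finset (ℕ × ℕ),
    (∀ p ∈ M, ((M.filter fun q => q ≠ p ∧ Intersects p.1 p.2 q.1 q.2).card < k)) →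
    ∃ c : ℕ × ℕ → Fin k, ∀ p ∈ M, ∀ q ∈ M, p ≠ q → Intersects p.1 p.2 q.1 q.2 → c p ≠ c q := by
  intro M
  induction M using Finset.strongInduction with
  | _ M ih =>
    intro hdeg
    rcases M.eq_empty_or_nonempty with rfl | ⟨p, hp⟩
    · exact ⟨fun _ => ⟨0, hk⟩, by simp⟩
    · obtain ⟨c, hc⟩ := ih (M.erase p) (Finset.erase_ssubset hp) (by
        intro q hq
        refine lt_of_le_of_lt (Finset.card_le_card ?_) (hdeg q (Finset.mem_of_mem_erase hq))
        intro x hx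
        simp only [Finset.mem_filter] at *
        exact ⟨Finset.mem_of_mem_erase hx.1, hx.2⟩)
      set N := (M.erase p).filter (fun q => Intersects p.1 p.2 q.1 q.2) with hN
      have hNcard : N.card < k := by
        refine lt_of_le_of_lt (Finset.card_le_card ?_) (hdeg p hp)
        intro x hx
        simp only [hN, Finset.mem_filter, Finset.mem_erase] at hx ⊢
        exact ⟨hx.1.2, hx.1.1, hx.2⟩
      have himg : (N.image c).card < Fintype.card (Fin k) := by
        refine lt_of_le_of_lt (Finset.card_image_le) ?_
        simpa using hNcard
      obtain ⟨i, hi⟩ : ∃ i : Fin k, i ∉ N.image c := by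
        by_contra hcon
        push_neg at hcon
        exact absurd (Finset.eq_univ_iff_forall.mpr hcon)
          ((Finset.card_lt_iff_ne_univ _).mp himg)
      refine ⟨Function.update c p i, ?_⟩
      intro a ha b hb hne hint
      by_cases hap : a = p <;> by_cases hbp : b = p
      · exact absurd (hap.trans hbp.symm) hne
      · subst hap
        rw [Function.update_self, Function.update_of_ne hbp]
        intro heq
        have hbN : b ∈ N := by
          simp only [hN, Finset.mem_filter, Finset.mem_erase]
          exact ⟨⟨hbp, hb⟩, hint⟩
        have := Finset.mem_image_of_mem c hbN
        rw [← heq] at this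
        exact hi this
      · subst hbp
        rw [Function.update_self, Function.update_of_ne hap]
        intro heq
        have haN : a ∈ N := by
          simp only [hN, Finset.mem_filter, Finset.mem_erase]
          exact ⟨⟨hap, ha⟩, hint.symm'⟩
        have := Finset.mem_image_of_mem c haN
        rw [heq] at this
        exact hi this
      · rw [Function.update_of_ne hap, Function.update_of_ne hbp]
        exact hc a (Finset.mem_erase.mpr ⟨hap, ha⟩) b (Finset.mem_erase.mpr ⟨hbp, hb⟩) hne hint

open scoped Classical in

/-- If `M` is a perfect matching on `{1,…,n}` with at most `k−1` pairwise
intersections (each unordered intersecting pair of requests is counted twice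
in the ordered count below), then there exist `k` BSTs on `{1,…,n}` such that
every matched pair appears as an edge in some tree. -/
theorem stmt_9 (n k : ℕ) (hk : 1 ≤ k) (hn : 2 ∣ n) (M : Finset (ℕ × ℕ))
    (horder : ∀ p ∈ M, p.1 < p.2)
    (hrange : ∀ p ∈ M, 1 ≤ p.1 ∧ p.2 ≤ n)
    (hcover : ∀ x, 1 ≤ x → x ≤ n → ∃! p, p ∈ M ∧ (x = p.1 ∨ x = p.2))
    (hX : ((M ×ˢ M).filter fun pq =>
        pq.1 ≠ pq.2 ∧ Intersects pq.1.1 pq.1.2 pq.2.1 pq.2.2).card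
          ≤ 2 * (k - 1)) :
    ∃ T : Fin k → BTree, (∀ i, IsBST n (T i)) ∧
      ∀ p ∈ M, ∃ i, (T i).IsEdge p.1 p.2 := by
  have hdeg : ∀ p ∈ M, (M.filter fun q => q ≠ p ∧ Intersects p.1 p.2 q.1 q.2).card < k := by
    intro p hp
    set N := M.filter fun q => q ≠ p ∧ Intersects p.1 p.2 q.1 q.2 with hNdef
    by_contra hcon
    push_neg at hcon
    have hsub : (N.image fun q => (p, q)) ∪ (N.image fun q => (q, p)) ⊆
        (M ×ˢ M).filter fun pq => pq.1 ≠ pq.2 ∧ Intersects pq.1.1 pq.1.2 pq.2.1 pq.2.2 := by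
      intro x hx
      simp only [Finset.mem_union, Finset.mem_image, hNdef, Finset.mem_filter] at hx
      rcases hx with ⟨q, ⟨hqM, hqne, hqint⟩, rfl⟩ | ⟨q, ⟨hqM, hqne, hqint⟩, rfl⟩
      · simp only [Finset.mem_filter, Finset.mem_product]
        exact ⟨⟨hp, hqM⟩, fun h => hqne h.symm, hqint⟩
      · simp only [Finset.mem_filter, Finset.mem_product]
        exact ⟨⟨hqM, hp⟩, hqne, hqint.symm'⟩
    have hdisj2 : Disjoint (N.image fun q => (p, q)) (N.image fun q => (q, p)) := by
      rw [Finset.disjoint_left]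
      intro x hx1 hx2
      simp only [Finset.mem_image, hNdef, Finset.mem_filter] at hx1 hx2
      obtain ⟨q, ⟨_, hqne, _⟩, rfl⟩ := hx1
      obtain ⟨r, ⟨_, hrne, _⟩, heq⟩ := hx2
      exact hrne (congrArg Prod.fst heq)
    have hcard1 : (N.image fun q => (p, q)).card = N.card :=
      Finset.card_image_of_injective _ (fun a b hab => by simpa using hab)
    have hcard2 : (N.image fun q => (q, p)).card = N.card :=
      Finset.card_image_of_injective _ (fun a b hab => by simpa using hab)
    have hle := Finset.card_le_card hsub
    rw [Finset.card_union_of_disjoint hdisj2, hcard1, hcard2] at hle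
    omega
  obtain ⟨c, hc⟩ := exists_coloring k hk M hdeg
  refine ⟨fun i => build (M.filter fun p => c p = i) 1 n, fun i => build_inorder _ n 1, ?_⟩
  intro p hp
  refine ⟨c p, Or.inl ?_⟩
  apply build_edge
  · intro q hq; exact horder q (Finset.mem_filter.mp hq).1
  · intro a haS b hbS hne hint
    exact absurd ((Finset.mem_filter.mp haS).2.trans (Finset.mem_filter.mp hbS).2.symm)
      (hc a (Finset.mem_filter.mp haS).1 b (Finset.mem_filter.mp hbS).1 hne hint)
  · intro a haS b hbS hshare
    have haM := (Finset.mem_filter.mp haS).1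
    have hbM := (Finset.mem_filter.mp hbS).1
    have hao := horder a haM
    have har := hrange a haM
    have key : ∀ x, 1 ≤ x → x ≤ n → (x = a.1 ∨ x = a.2) → (x = b.1 ∨ x = b.2) → a = b := by
      intro x h1 h2 hxa hxb
      obtain ⟨r, _, hu⟩ := hcover x h1 h2
      rw [hu a ⟨haM, hxa⟩, hu b ⟨hbM, hxb⟩]
    rcases hshare with h|h|h|h
    · exact key a.1 har.1 (by omega) (Or.inl rfl) (Or.inl h)
    · exact key a.1 har.1 (by omega) (Or.inl rfl) (Or.inr h)
    · exact key a.2 (by omega) har.2 (Or.inr rfl) (Or.inl h)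
    · exact key a.2 (by omega) har.2 (Or.inr rfl) (Or.inr h)
  · intro q hq _
    have h1 := hrange q (Finset.mem_filter.mp hq).1
    have h2 := horder q (Finset.mem_filter.mp hq).1
    omega
  · exact Finset.mem_filter.mpr ⟨hp, rfl⟩
  · exact (hrange p hp).1
  · have := hrange p hp; omega
end

section
/- Consider the 'laminated' tree structure on {1,…,n} (n divisible by 4) with edge sets E₁ = {{i, n/2−i+1} : 1 ≤ i ≤ n/4} ∪ {{n/2−i, i+2} : 0 ≤ i ≤ n/4−2} ∪ {{n/2+i, n−i} : 0 ≤ i ≤ n/4−1} ∪ {{n−i, n/2+1+i} : 0 ≤ i ≤ n/4−1} and E₂ = {{i, n−i+1} : 1 ≤ i ≤ n/2} ∪ {{n−i, i+2} : 0 ≤ i ≤ n/2−2}. Then for every interval I = [x, x+ℓ] with n/8 < ℓ < n/4, the number of edges in E₁ ∪ E₂ with exactly one endpoint in I is Ω(ℓ). -/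
/-- The edge set `E₁` of the first laminated tree. -/
def E1 (n : ℕ) : Finset (ℕ × ℕ) :=
  ((Finset.Icc 1 (n / 4)).image fun i => (i, n / 2 - i + 1)) ∪
  ((Finset.Icc 0 (n / 4 - 2)).image fun i => (n / 2 - i, i + 2)) ∪
  ((Finset.Icc 0 (n / 4 - 1)).image fun i => (n / 2 + i, n - i)) ∪
  ((Finset.Icc 0 (n / 4 - 1)).image fun i => (n - i, n / 2 + 1 + i))

/-- The edge set `E₂` of the second laminated tree. -/
def E2 (n : ℕ) : Finset (ℕ × ℕ) :=
  ((Finset.Icc 1 (n / 2)).image fun i => (i, n - i + 1)) ∪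
  ((Finset.Icc 0 (n / 2 - 2)).image fun i => (n - i, i + 2))

/-- Every interval `I = [x, x+ℓ]` with `n/8 < ℓ < n/4` cuts `Ω(ℓ)` edges of
`E₁ ∪ E₂`: there is a universal constant `c > 0` such that the number of edges
with exactly one endpoint in `I` is at least `c·ℓ`. -/
theorem stmt_14 :
    ∃ c : ℝ, 0 < c ∧
      ∀ n x ℓ : ℕ, 4 ∣ n → n < 8 * ℓ → 4 * ℓ < n → 1 ≤ x → x + ℓ ≤ n →
        c * ℓ ≤
          (((E1 n ∪ E2 n).filter fun e =>
              (e.1 ∈ Finset.Icc x (x + ℓ) ∧ e.2 ∉ Finset.Icc x (x + ℓ)) ∨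
              (e.1 ∉ Finset.Icc x (x + ℓ) ∧ e.2 ∈ Finset.Icc x (x + ℓ))).card
            : ℝ) := by
  refine ⟨1/2, by norm_num, ?_⟩
  intro n x ℓ h4 h8' hℓ' hx hxn
  obtain ⟨m, rfl⟩ := h4
  set T := ((E1 (4*m) ∪ E2 (4*m)).filter fun e =>
      (e.1 ∈ Finset.Icc x (x + ℓ) ∧ e.2 ∉ Finset.Icc x (x + ℓ)) ∨
      (e.1 ∉ Finset.Icc x (x + ℓ) ∧ e.2 ∈ Finset.Icc x (x + ℓ))) with hT
  suffices h : ℓ ≤ 2 * T.card by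
    have h2 : (ℓ : ℝ) ≤ 2 * T.card := by exact_mod_cast h
    linarith
  by_cases hA : x + ℓ ≤ 2*m
  · -- interval in the first half; use E2 edges (i, 4m - i + 1)
    have key : (Finset.Icc x (x+ℓ)).card ≤ T.card := by
      apply Finset.card_le_card_of_injOn (fun i => (i, 4*m - i + 1))
      · intro i hi
        simp only [Finset.mem_coe, Finset.mem_Icc] at hi
        refine Finset.mem_filter.mpr ⟨?_, ?_⟩
        · apply Finset.mem_union_right
          apply Finset.mem_union_left
          exact Finset.mem_image.mpr ⟨i, by simp only [Finset.mem_Icc]; omega, rfl⟩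
        · left
          simp only [Finset.mem_Icc, Prod.fst, Prod.snd, not_and, not_le]
          omega
      · intro a _ b _ hab
        exact congrArg Prod.fst hab
    simp only [Nat.card_Icc] at key
    omega
  · by_cases hB : 2*m + 1 ≤ x
    · -- interval in the second half; use E2 edges (4m+1-j, j)
      have key : (Finset.Icc x (x+ℓ)).card ≤ T.card := by
        apply Finset.card_le_card_of_injOn (fun j => (4*m + 1 - j, j))
        · intro j hj
          simp only [Finset.mem_coe, Finset.mem_Icc] at hj
          refine Finset.mem_filter.mpr ⟨?_, ?_⟩
          · apply Finset.mem_union_right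
            apply Finset.mem_union_left
            refine Finset.mem_image.mpr ⟨4*m + 1 - j, by simp only [Finset.mem_Icc]; omega, ?_⟩
            simp only [Prod.mk.injEq, true_and, and_true]
            omega
          · right
            simp only [Finset.mem_Icc, Prod.fst, Prod.snd, not_and, not_le]
            omega
        · intro a _ b _ hab
          exact congrArg Prod.snd hab
      simp only [Nat.card_Icc] at key
      omega
    · -- interval crosses the midpoint: x ≤ 2m < x + ℓ
      push_neg at hA hB
      by_cases hC : ℓ ≤ 2 * (2*m + 1 - x)
      · -- use E1 edges (j, 2m - j + 1) for 1 ≤ j ≤ 2m+1-x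
        have key : (Finset.Icc 1 (2*m + 1 - x)).card ≤ T.card := by
          apply Finset.card_le_card_of_injOn (fun j => (j, 2*m - j + 1))
          · intro j hj
            simp only [Finset.mem_coe, Finset.mem_Icc] at hj
            refine Finset.mem_filter.mpr ⟨?_, ?_⟩
            · apply Finset.mem_union_left
              apply Finset.mem_union_left
              apply Finset.mem_union_left
              apply Finset.mem_union_left
              refine Finset.mem_image.mpr ⟨j, by simp only [Finset.mem_Icc]; omega, ?_⟩
              simp only [Prod.mk.injEq, true_and, and_true]
              omega
            · right
              simp only [Finset.mem_Icc]
              omega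
          · intro a _ b _ hab
            exact congrArg Prod.fst hab
        simp only [Nat.card_Icc] at key
        omega
      · -- use E1 edges (2m + i, 4m - i) for 0 ≤ i ≤ x+ℓ-2m
        have key : (Finset.Icc 0 (x + ℓ - 2*m)).card ≤ T.card := by
          apply Finset.card_le_card_of_injOn (fun i => (2*m + i, 4*m - i))
          · intro i hi
            simp only [Finset.mem_coe, Finset.mem_Icc] at hi
            refine Finset.mem_filter.mpr ⟨?_, ?_⟩
            · apply Finset.mem_union_left
              apply Finset.mem_union_left
              apply Finset.mem_union_right
              refine Finset.mem_image.mpr ⟨i, by simp only [Finset.mem_Icc]; omega, ?_⟩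
              simp only [Prod.mk.injEq, true_and, and_true]
              omega
            · left
              simp only [Finset.mem_Icc]
              omega
          · intro a _ b _ hab
            have := congrArg Prod.fst hab
            simp only at this
            omega
        simp only [Nat.card_Icc] at key
        omega
end

section
/- Any binary search tree on {1,…,n} can be transformed into any other binary search tree on {1,…,n} by a finite sequence of rotations. -/
/-- A single (left or right) rotation at some node of the tree. -/
inductive Rot : BTree → BTree → Prop
  | rotRight (A B C : BTree) (x y : ℕ) :
      Rot (.node (.node A x B) y C) (.node A x (.node B y C))
  | rotLeft (A B C : BTree) (x y : ℕ) :
      Rot (.node A x (.node B y C)) (.node (.node A x B) y C)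
  | congLeft {l l' : BTree} (v : ℕ) (r : BTree) :
      Rot l l' → Rot (.node l v r) (.node l' v r)
  | congRight {r r' : BTree} (v : ℕ) (l : BTree) :
      Rot r r' → Rot (.node l v r) (.node l v r')

/-- The right spine (comb) with given inorder list. -/
def spine : List ℕ → BTree
  | [] => .leaf
  | x :: xs => .node .leaf x (spine xs)

lemma spine_inorder : ∀ xs, (spine xs).inorder = xs
  | [] => rfl
  | x :: xs => by simp [spine, BTree.inorder, spine_inorder xs]

lemma rot_symm {a b : BTree} (h : Rot a b) : Rot b a := by
  induction h with
  | rotRight A B C x y => exact .rotLeft A B C x y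
  | rotLeft A B C x y => exact .rotRight A B C x y
  | congLeft v r _ ih => exact .congLeft v r ih
  | congRight v l _ ih => exact .congRight v l ih

lemma rtg_symm {a b : BTree} (h : Relation.ReflTransGen Rot a b) :
    Relation.ReflTransGen Rot b a := by
  induction h with
  | refl => exact .refl
  | tail _ h ih => exact Relation.ReflTransGen.head (rot_symm h) ih

lemma aux_spine : ∀ (l : BTree) (v : ℕ) (rs : List ℕ),
    Relation.ReflTransGen Rot (.node l v (spine rs)) (spine (l.inorder ++ v :: rs))
  | .leaf, v, rs => by simp only [BTree.inorder, List.nil_append, spine]; exact .refl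
  | .node A x B, v, rs => by
    have step : Rot (.node (.node A x B) v (spine rs)) (.node A x (.node B v (spine rs))) :=
      .rotRight A B (spine rs) x v
    have h1 : Relation.ReflTransGen Rot (.node A x (.node B v (spine rs)))
        (.node A x (spine (B.inorder ++ v :: rs))) :=
      Relation.ReflTransGen.lift (p := Rot) (fun z => BTree.node A x z)
        (fun a b (hab : Rot a b) => Rot.congRight x A hab) _ _ (aux_spine B v rs)
    have h2 := aux_spine A x (B.inorder ++ v :: rs)
    have : (BTree.node A x B).inorder ++ v :: rs = A.inorder ++ x :: (B.inorder ++ v :: rs) := by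
      simp [BTree.inorder]
    rw [this]
    exact Relation.ReflTransGen.head step (h1.trans h2)

lemma to_spine : ∀ t : BTree, Relation.ReflTransGen Rot t (spine t.inorder)
  | .leaf => .refl
  | .node l v r => by
    have h1 : Relation.ReflTransGen Rot (BTree.node l v r) (.node l v (spine r.inorder)) :=
      Relation.ReflTransGen.lift (p := Rot) (fun z => BTree.node l v z)
        (fun a b (hab : Rot a b) => Rot.congRight v l hab) _ _ (to_spine r)
    exact h1.trans (aux_spine l v r.inorder)

/-- Any BST on `{1,…,n}` can be transformed into any other BST on `{1,…,n}`
by a finite sequence of rotations. -/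
theorem stmt_16 (n : ℕ) (t t' : BTree) (h : IsBST n t) (h' : IsBST n t') :
    Relation.ReflTransGen Rot t t' := by
  have h1 := to_spine t
  have h2 := to_spine t'
  rw [h] at h1
  rw [h'] at h2
  exact h1.trans (rtg_symm h2)
end
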